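/- Let E be a real inner product space and K ⊆ E a convex set of diameter at most D > 0. Let T ≥ 1, G > 0, and ℓ₁, …, ℓ_T : E → ℝ differentiable convex functions (ℓ_t(y) ≥ ℓ_t(x) + ⟨∇ℓ_t(x), y − x⟩ for x, y ∈ K) with ‖∇ℓ_t(x)‖ ≤ G for x ∈ K. Let η₁ ≥ η₂ ≥ … ≥ η_T > 0. Let μ̂₁ ∈ K and define, for 1 ≤ t ≤ T, μ̂_{t+1} as a metric projection onto K of μ̂_t − η_t∇ℓ_t(μ̂_t). Let μ₁, …, μ_{T+1} ∈ K be arbitrary comparators and define Perf(t) := ⟨μ̂_{t+1} − (μ_t + μ_{t+1})/2, μ_{t+1} − μ_t⟩. Then Σ_{t=1}^{T} ℓ_t(μ̂_t) − Σ_{t=1}^{T} ℓ_t(μ_t) ≤ D²/(2η_T) + (G²/2)·Σ_{t=1}^{T} η_t − Σ_{t=1}^{T} Perf(t)/η_t. -/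

import Mathlib

open RealInnerProductSpace Finset

private lemma inner_diff_sq {E : Type*} [NormedAddCommGroup E] [InnerProductSpace ℝ E]
    (x y : E) : ‖x‖ ^ 2 - ‖y‖ ^ 2 = ⟪x + y, x - y⟫ := by
  rw [inner_add_left, inner_sub_right, inner_sub_right, real_inner_self_eq_norm_sq,
    real_inner_self_eq_norm_sq, real_inner_comm y x]
  ring

private lemma proj_nonexpansive {E : Type*} [NormedAddCommGroup E] [InnerProductSpace ℝ E]
    {K : Set E} (hK : Convex ℝ K) {z q y : E} (hq : q ∈ K) (hy : y ∈ K)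
    (hmin : ∀ w ∈ K, ‖z - q‖ ≤ ‖z - w‖) : ‖q - y‖ ≤ ‖z - y‖ := by
  have hinner : ⟪z - q, y - q⟫ ≤ 0 := by
    haveI : Nonempty K := ⟨⟨q, hq⟩⟩
    have heq : ‖z - q‖ = ⨅ w : K, ‖z - w‖ := by
      apply le_antisymm
      · exact le_ciInf fun w => hmin w w.2
      · have hbdd : BddBelow (Set.range fun w : K => ‖z - (w : E)‖) :=
          ⟨0, by rintro b ⟨w, rfl⟩; exact norm_nonneg _⟩
        exact ciInf_le hbdd ⟨q, hq⟩
    exact (norm_eq_iInf_iff_real_inner_le_zero hK hq).mp heq y hy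
  have hexp : ‖z - y‖ ^ 2 = ‖z - q‖ ^ 2 + 2 * ⟪z - q, q - y⟫ + ‖q - y‖ ^ 2 := by
    have : z - y = (z - q) + (q - y) := by abel
    rw [this, norm_add_sq_real]
  have hqy : ⟪z - q, q - y⟫ = -⟪z - q, y - q⟫ := by rw [← inner_neg_right, neg_sub]
  have hsq : ‖q - y‖ ^ 2 ≤ ‖z - y‖ ^ 2 := by nlinarith [sq_nonneg ‖z - q‖]
  nlinarith [norm_nonneg (q - y), norm_nonneg (z - y)]

private lemma telescope_bound (a η : ℕ → ℝ) (D2 : ℝ) :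
    ∀ T, 1 ≤ T →
    (∀ t ∈ Icc 1 (T + 1), 0 ≤ a t ∧ a t ≤ D2) →
    (∀ t ∈ Icc 1 T, 0 < η t) →
    (∀ t, 1 ≤ t → t < T → η (t + 1) ≤ η t) →
    ∑ t ∈ Icc 1 T, (a t - a (t + 1)) / (2 * η t) ≤ D2 / (2 * η T) - a (T + 1) / (2 * η T) := by
  intro T hT
  induction T, hT using Nat.le_induction with
  | base =>
    intro ha hη _
    rw [Finset.Icc_self, Finset.sum_singleton]
    have h1 : 0 < η 1 := hη 1 (by simp)
    have ha1 := (ha 1 (by simp)).2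
    rw [div_sub_div_same]
    gcongr
  | succ n hn ih =>
    intro ha hη hmono
    have hsum := ih (fun t ht => ha t (by simp only [Finset.mem_Icc] at *; omega))
      (fun t ht => hη t (by simp only [Finset.mem_Icc] at *; omega))
      (fun t h1 h2 => hmono t h1 (by omega))
    rw [Finset.sum_Icc_succ_top (by omega : 1 ≤ n + 1)]
    have hηn : 0 < η n := hη n (by simp only [Finset.mem_Icc]; omega)
    have hηn1 : 0 < η (n + 1) := hη (n + 1) (by simp only [Finset.mem_Icc]; omega)
    have hmle : η (n + 1) ≤ η n := hmono n hn (by omega)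
    have han1 := ha (n + 1) (by simp only [Finset.mem_Icc]; omega)
    have han2 := (ha (n + 2) (by simp only [Finset.mem_Icc]; omega)).1
    have key : D2 / (2 * η n) - a (n + 1) / (2 * η n)
        + (a (n + 1) - a (n + 2)) / (2 * η (n + 1))
        ≤ D2 / (2 * η (n + 1)) - a (n + 2) / (2 * η (n + 1)) := by
      rw [div_sub_div_same, div_sub_div_same]
      have hstep : (D2 - a (n + 1)) / (2 * η n) ≤ (D2 - a (n + 1)) / (2 * η (n + 1)) := by
        apply div_le_div_of_nonneg_left (by linarith) (by linarith) (by linarith)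
      calc (D2 - a (n + 1)) / (2 * η n) + (a (n + 1) - a (n + 2)) / (2 * η (n + 1))
          ≤ (D2 - a (n + 1)) / (2 * η (n + 1)) + (a (n + 1) - a (n + 2)) / (2 * η (n + 1)) := by
            linarith
        _ = (D2 - a (n + 2)) / (2 * η (n + 1)) := by rw [← add_div]; ring_nf
    linarith

theorem ogd_regret_performance {E : Type*} [NormedAddCommGroup E] [InnerProductSpace ℝ E]
    [CompleteSpace E]
    (K : Set E) (hK : Convex ℝ K) (D : ℝ) (hD : 0 < D)
    (hdiam : ∀ x ∈ K, ∀ y ∈ K, ‖x - y‖ ≤ D)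
    (T : ℕ) (hT : 1 ≤ T) (G : ℝ) (hG : 0 < G)
    (ℓ : ℕ → E → ℝ) (g : ℕ → E → E)
    (hdiff : ∀ t, ∀ x : E, HasGradientAt (ℓ t) (g t x) x)
    (hconv : ∀ t ∈ Icc 1 T, ∀ x ∈ K, ∀ y ∈ K, ℓ t x + ⟪g t x, y - x⟫ ≤ ℓ t y)
    (hGb : ∀ t ∈ Icc 1 T, ∀ x ∈ K, ‖g t x‖ ≤ G)
    (η : ℕ → ℝ) (hηpos : ∀ t ∈ Icc 1 T, 0 < η t)
    (hηmono : ∀ t, 1 ≤ t → t < T → η (t + 1) ≤ η t)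
    (p : ℕ → E) (hp1 : p 1 ∈ K)
    (hiter : ∀ t ∈ Icc 1 T, p (t + 1) ∈ K ∧
      ∀ y ∈ K, ‖p t - η t • g t (p t) - p (t + 1)‖ ≤ ‖p t - η t • g t (p t) - y‖)
    (μ : ℕ → E) (hμK : ∀ t ∈ Icc 1 (T + 1), μ t ∈ K) :
    ∑ t ∈ Icc 1 T, ℓ t (p t) - ∑ t ∈ Icc 1 T, ℓ t (μ t) ≤
      D ^ 2 / (2 * η T) + G ^ 2 / 2 * ∑ t ∈ Icc 1 T, η t
        - ∑ t ∈ Icc 1 T, ⟪p (t + 1) - (2 : ℝ)⁻¹ • (μ t + μ (t + 1)), μ (t + 1) - μ t⟫ / η t := by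
  set a : ℕ → ℝ := fun t => ‖p t - μ t‖ ^ 2 with haa
  have hpK : ∀ t ∈ Icc 1 (T + 1), p t ∈ K := by
    intro t ht
    simp only [Finset.mem_Icc] at ht
    match t, ht with
    | 1, _ => exact hp1
    | (n + 2), h =>
      exact (hiter (n + 1) (by simp only [Finset.mem_Icc]; omega)).1
  have key : ∀ t ∈ Icc 1 T, ℓ t (p t) - ℓ t (μ t) ≤
      (a t - a (t + 1)) / (2 * η t) + G ^ 2 / 2 * η t
        - ⟪p (t + 1) - (2 : ℝ)⁻¹ • (μ t + μ (t + 1)), μ (t + 1) - μ t⟫ / η t := by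
    intro t ht
    have htm := Finset.mem_Icc.mp ht
    have hηt : 0 < η t := hηpos t ht
    have hne : η t ≠ 0 := ne_of_gt hηt
    have hptK : p t ∈ K := hpK t (by simp only [Finset.mem_Icc]; omega)
    have hpt1K : p (t + 1) ∈ K := (hiter t ht).1
    have hμt : μ t ∈ K := hμK t (by simp only [Finset.mem_Icc]; omega)
    have hμt1 : μ (t + 1) ∈ K := hμK (t + 1) (by simp only [Finset.mem_Icc]; omega)
    set gt := g t (p t) with hgt
    have hg : ‖gt‖ ≤ G := hGb t ht _ hptK
    set P : ℝ := ⟪p (t + 1) - (2 : ℝ)⁻¹ • (μ t + μ (t + 1)), μ (t + 1) - μ t⟫ with hP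
    have h1 := hconv t ht (p t) hptK (μ t) hμt
    have h1' : ℓ t (p t) - ℓ t (μ t) ≤ ⟪gt, p t - μ t⟫ := by
      have hi : ⟪gt, μ t - p t⟫ = -⟪gt, p t - μ t⟫ := by rw [← inner_neg_right, neg_sub]
      rw [hi] at h1; linarith
    have h2 : ‖p (t + 1) - μ t‖ ≤ ‖(p t - η t • gt) - μ t‖ :=
      proj_nonexpansive hK hpt1K hμt (hiter t ht).2
    have hz : (p t - η t • gt) - μ t = (p t - μ t) - η t • gt := by abel
    have h3 : ‖(p t - μ t) - η t • gt‖ ^ 2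
        = ‖p t - μ t‖ ^ 2 - 2 * (η t * ⟪gt, p t - μ t⟫) + η t ^ 2 * ‖gt‖ ^ 2 := by
      rw [norm_sub_sq_real, real_inner_smul_right, norm_smul, Real.norm_eq_abs,
        abs_of_pos hηt, mul_pow, real_inner_comm (p t - μ t) gt]
    have h4 : ‖p (t + 1) - μ t‖ ^ 2 - ‖p (t + 1) - μ (t + 1)‖ ^ 2 = 2 * P := by
      rw [inner_diff_sq]
      have e1 : (p (t + 1) - μ t) + (p (t + 1) - μ (t + 1))
          = (2 : ℝ) • (p (t + 1) - (2 : ℝ)⁻¹ • (μ t + μ (t + 1))) := by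
        rw [smul_sub, smul_smul]
        norm_num
        rw [two_smul]
        abel
      have e2 : (p (t + 1) - μ t) - (p (t + 1) - μ (t + 1)) = μ (t + 1) - μ t := by abel
      rw [e1, e2, real_inner_smul_left, hP]
    have hsq2 : ‖p (t + 1) - μ t‖ ^ 2 ≤ ‖(p t - η t • gt) - μ t‖ ^ 2 :=
      pow_le_pow_left₀ (norm_nonneg _) h2 2
    have hgsq : ‖gt‖ ^ 2 ≤ G ^ 2 := pow_le_pow_left₀ (norm_nonneg _) hg 2
    have hat : a t = ‖p t - μ t‖ ^ 2 := rfl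
    have hat1 : a (t + 1) = ‖p (t + 1) - μ (t + 1)‖ ^ 2 := rfl
    have hfin : 2 * η t * (ℓ t (p t) - ℓ t (μ t))
        ≤ a t - a (t + 1) + η t ^ 2 * G ^ 2 - 2 * P := by
      have hmul := mul_le_mul_of_nonneg_left h1' (by linarith : (0:ℝ) ≤ 2 * η t)
      rw [hz] at hsq2
      nlinarith [sq_nonneg (η t)]
    have h2e : (0:ℝ) < 2 * η t := by linarith
    calc ℓ t (p t) - ℓ t (μ t)
        = (2 * η t * (ℓ t (p t) - ℓ t (μ t))) / (2 * η t) := by field_simp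
      _ ≤ (a t - a (t + 1) + η t ^ 2 * G ^ 2 - 2 * P) / (2 * η t) := by gcongr
      _ = (a t - a (t + 1)) / (2 * η t) + G ^ 2 / 2 * η t - P / η t := by
          field_simp
  have htel : ∑ t ∈ Icc 1 T, (a t - a (t + 1)) / (2 * η t)
      ≤ D ^ 2 / (2 * η T) - a (T + 1) / (2 * η T) := by
    apply telescope_bound a η (D ^ 2) T hT
    · intro t ht
      refine ⟨sq_nonneg _, ?_⟩
      have := hdiam (p t) (hpK t ht) (μ t) (hμK t ht)
      exact pow_le_pow_left₀ (norm_nonneg _) this 2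
    · exact hηpos
    · exact hηmono
  have hηT : 0 < η T := hηpos T (by simp only [Finset.mem_Icc]; omega)
  have haT1 : 0 ≤ a (T + 1) := sq_nonneg _
  have hlast : 0 ≤ a (T + 1) / (2 * η T) := by positivity
  calc ∑ t ∈ Icc 1 T, ℓ t (p t) - ∑ t ∈ Icc 1 T, ℓ t (μ t)
      = ∑ t ∈ Icc 1 T, (ℓ t (p t) - ℓ t (μ t)) := (Finset.sum_sub_distrib _ _).symm
    _ ≤ ∑ t ∈ Icc 1 T, ((a t - a (t + 1)) / (2 * η t) + G ^ 2 / 2 * η t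
        - ⟪p (t + 1) - (2 : ℝ)⁻¹ • (μ t + μ (t + 1)), μ (t + 1) - μ t⟫ / η t) :=
        Finset.sum_le_sum key
    _ = ∑ t ∈ Icc 1 T, (a t - a (t + 1)) / (2 * η t) + G ^ 2 / 2 * ∑ t ∈ Icc 1 T, η t
        - ∑ t ∈ Icc 1 T, ⟪p (t + 1) - (2 : ℝ)⁻¹ • (μ t + μ (t + 1)), μ (t + 1) - μ t⟫ / η t := by
        rw [Finset.sum_sub_distrib, Finset.sum_add_distrib, ← Finset.mul_sum]
    _ ≤ D ^ 2 / (2 * η T) + G ^ 2 / 2 * ∑ t ∈ Icc 1 T, η t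
        - ∑ t ∈ Icc 1 T, ⟪p (t + 1) - (2 : ℝ)⁻¹ • (μ t + μ (t + 1)), μ (t + 1) - μ t⟫ / η t := by
        linarith
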